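/- Let V be a real topological vector space, let q : V → ℝ be a continuous weak Minkowski norm, and let P := { p ∈ V' | ⟨p,x⟩ ≤ q(x) for all x ∈ V }. A function f : V → ℝ is nonexpansive with respect to q if, and only if, for every x ∈ V, f(x) = min_{y ∈ V} max_{p ∈ P} ( ⟨p,x−y⟩ + f(y) ), where the inner maximum over P is attained for each y and the outer infimum over y is attained. -/

import Mathlib

lemma q_zero {V : Type*} [AddCommGroup V] [Module ℝ V]
    (q : V → ℝ) (hq_hom : ∀ (c : ℝ), 0 ≤ c → ∀ x : V, q (c • x) = c * q x) : q 0 = 0 := by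
  simpa using hq_hom 0 le_rfl 0

lemma q_add {V : Type*} [AddCommGroup V] [Module ℝ V]
    (q : V → ℝ) (hq_convex : ConvexOn ℝ Set.univ q)
    (hq_hom : ∀ (c : ℝ), 0 ≤ c → ∀ x : V, q (c • x) = c * q x) (x y : V) :
    q (x + y) ≤ q x + q y := by
  have h := hq_convex.2 (Set.mem_univ x) (Set.mem_univ y)
    (by norm_num : (0:ℝ) ≤ 1/2) (by norm_num : (0:ℝ) ≤ 1/2) (by norm_num)
  have h2 := hq_hom 2 (by norm_num) ((1/2 : ℝ) • x + (1/2 : ℝ) • y)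
  have hxy : (2:ℝ) • ((1/2 : ℝ) • x + (1/2 : ℝ) • y) = x + y := by
    rw [smul_add, smul_smul, smul_smul]; norm_num
  rw [hxy] at h2
  simp only [smul_eq_mul] at h
  linarith

lemma exists_dominating {V : Type*} [AddCommGroup V] [Module ℝ V] [TopologicalSpace V]
    [IsTopologicalAddGroup V] [ContinuousSMul ℝ V]
    (q : V → ℝ) (hq_convex : ConvexOn ℝ Set.univ q)
    (hq_hom : ∀ (c : ℝ), 0 ≤ c → ∀ x : V, q (c • x) = c * q x)
    (hq_cont : Continuous q) (v : V) :
    ∃ p : V →L[ℝ] ℝ, (∀ z : V, p z ≤ q z) ∧ p v = q v := by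
  have hq0 : q 0 = 0 := q_zero q hq_hom
  have hadd : ∀ x y : V, q (x + y) ≤ q x + q y := q_add q hq_convex hq_hom
  have hsum : ∀ x : V, 0 ≤ q x + q (-x) := by
    intro x
    have := hadd x (-x)
    simpa [hq0] using this
  have H : ∀ c : ℝ, c • v = 0 → c • (q v) = 0 := by
    intro c hc
    rcases eq_or_ne v 0 with rfl | hv
    · simp [hq0]
    · rcases smul_eq_zero.1 hc with rfl | h
      · simp
      · exact absurd h hv
  set fp := LinearPMap.mkSpanSingleton' (σ := RingHom.id ℝ) v (q v) H with hfp
  have hf : ∀ x : fp.domain, fp x ≤ q x := by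
    rintro ⟨x, hx⟩
    obtain ⟨c, rfl⟩ := Submodule.mem_span_singleton.1 hx
    rw [LinearPMap.mkSpanSingleton'_apply]
    simp only [smul_eq_mul, RingHom.id_apply]
    rcases le_or_gt 0 c with hc | hc
    · rw [hq_hom c hc]
    · have h1 : q (c • v) = (-c) * q (-v) := by
        have : c • v = (-c) • (-v) := by simp
        rw [this, hq_hom (-c) (by linarith)]
      have := hsum v
      nlinarith
  obtain ⟨g, hg1, hg2⟩ := exists_extension_of_le_sublinear fp q
    (fun c hc x => hq_hom c hc.le x) hadd hf
  have hgv : g v = q v := by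
    have h := hg1 ⟨v, Submodule.mem_span_singleton_self v⟩
    replace h := h.trans (LinearPMap.mkSpanSingleton'_apply_self (σ := RingHom.id ℝ) v (q v) H _)
    exact h
  have hcont : Continuous g := by
    apply continuous_of_continuousAt_zero g
    rw [ContinuousAt, map_zero]
    rw [Metric.tendsto_nhds]
    intro ε hε
    have hU : IsOpen {x : V | q x < ε ∧ q (-x) < ε} := by
      exact (isOpen_Iio.preimage hq_cont).inter
        (isOpen_Iio.preimage (hq_cont.comp continuous_neg))
    have h0 : (0 : V) ∈ {x : V | q x < ε ∧ q (-x) < ε} := by simp [hq0, hε]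
    filter_upwards [hU.mem_nhds h0] with x hx
    rw [Real.dist_eq, sub_zero, abs_lt]
    constructor
    · have : g (-x) ≤ q (-x) := hg2 (-x)
      rw [map_neg] at this
      linarith [hx.2]
    · linarith [hg2 x, hx.1]
  exact ⟨⟨g, hcont⟩, hg2, hgv⟩

theorem stmt3 {V : Type*} [AddCommGroup V] [Module ℝ V] [TopologicalSpace V]
    [IsTopologicalAddGroup V] [ContinuousSMul ℝ V]
    (q : V → ℝ) (hq_convex : ConvexOn ℝ Set.univ q)
    (hq_hom : ∀ (c : ℝ), 0 ≤ c → ∀ x : V, q (c • x) = c * q x)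
    (hq_cont : Continuous q) (f : V → ℝ) :
    (∀ x y : V, f x - f y ≤ q (x - y)) ↔
      ∀ x : V,
        (∀ y : V, ∃ r : ℝ,
          IsGreatest {s : ℝ | ∃ p : V →L[ℝ] ℝ, (∀ z : V, p z ≤ q z) ∧ s = p (x - y) + f y} r) ∧
        IsLeast {r : ℝ | ∃ y : V,
          IsGreatest {s : ℝ | ∃ p : V →L[ℝ] ℝ, (∀ z : V, p z ≤ q z) ∧ s = p (x - y) + f y} r}
          (f x) := by
  have hq0 : q 0 = 0 := q_zero q hq_hom
  have key : ∀ x y : V,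
      IsGreatest {s : ℝ | ∃ p : V →L[ℝ] ℝ, (∀ z : V, p z ≤ q z) ∧ s = p (x - y) + f y}
        (q (x - y) + f y) := by
    intro x y
    obtain ⟨p, hp, hpv⟩ := exists_dominating q hq_convex hq_hom hq_cont (x - y)
    constructor
    · exact ⟨p, hp, by rw [hpv]⟩
    · rintro s ⟨p', hp', rfl⟩
      linarith [hp' (x - y)]
  constructor
  · intro hne x
    refine ⟨fun y => ⟨q (x - y) + f y, key x y⟩, ?_, ?_⟩
    · refine ⟨x, ?_⟩
      have h := key x x
      simpa [hq0] using h
    · rintro r ⟨y, hy⟩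
      have : r = q (x - y) + f y := hy.unique (key x y)
      rw [this]
      linarith [hne x y]
  · intro h x y
    have hx := (h x).2
    have : f x ≤ q (x - y) + f y := hx.2 ⟨y, key x y⟩
    linarith
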